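/- Conditional correctness under resampling (Corollary 1): let p* be a strictly positive probability mass function on V^d, let R = {r_1 < r_2 < … < r_L} ⊆ {1,…,d} be a set of positions selected for resampling, and fix values y ∈ V^{d-L} for the coordinates outside R. For each m ∈ {1,…,L} and each partial assignment w ∈ V^{m-1} of the earlier resampled positions r_1,…,r_{m-1}, let π_m(· | w) be the conditional law under p* of the coordinate at r_m given that the coordinates at r_1,…,r_{m-1} equal w and the coordinates outside R equal y, and let ρ_m(· | w) be an arbitrary probability mass function on V. Define the committed kernels κ_m from (π_m, ρ_m) by the speculative accept–reject–residual rule. Then for every x_R ∈ V^L, ∏_{m=1}^{L} κ_m(x^{r_m} | x^{r_1},…,x^{r_{m-1}}) = p*(X_R = x_R | X_{R^c} = y), i.e., the regenerated coordinates have exactly the oracle conditional joint law given the fixed coordinates. -/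

import Mathlib

open scoped Classical

/-- The law of the token committed by one speculative accept–reject step with
target `π` and draft `ρ`: a draft token `a ~ ρ` is accepted with probability
`min 1 (π a / ρ a)` (accepted mass `min (π a) (ρ a)`); upon rejection
(probability `r = 1 - ∑ z, min (π z) (ρ z)`), a corrected token is sampled from
the residual distribution `π' a = max (π a - ρ a) 0 / r`. -/
noncomputable def committedKernel {V : Type*} [Fintype V] (π ρ : V → ℝ) (a : V) : ℝ :=
  if 1 - ∑ z, min (π z) (ρ z) = 0 then min (π a) (ρ a)
  else min (π a) (ρ a) +
    (1 - ∑ z, min (π z) (ρ z)) *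
      (max (π a - ρ a) 0 / (1 - ∑ z, min (π z) (ρ z)))

/-- Oracle conditional law at the `m`-th resampled position: the conditional
law under `pstar` of the coordinate `r m`, given that the earlier resampled
coordinates `r 0, …, r (m-1)` equal `w` and the coordinates outside the range
of `r` equal `y`. -/
noncomputable def resampleCond {V : Type*} [Fintype V] {d L : ℕ}
    (pstar : (Fin d → V) → ℝ) (r : Fin L → Fin d)
    (y : {j : Fin d // j ∉ Set.range r} → V)
    (m : Fin L) (w : Fin (m : ℕ) → V) (a : V) : ℝ :=
  (∑ x : Fin d → V,
      if (∀ j : Fin d, (hj : j ∉ Set.range r) → x j = y ⟨j, hj⟩) ∧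
         (∀ t : Fin L, (ht : (t : ℕ) < (m : ℕ)) → x (r t) = w ⟨t, ht⟩) ∧
         x (r m) = a
      then pstar x else 0) /
  (∑ x : Fin d → V,
      if (∀ j : Fin d, (hj : j ∉ Set.range r) → x j = y ⟨j, hj⟩) ∧
         (∀ t : Fin L, (ht : (t : ℕ) < (m : ℕ)) → x (r t) = w ⟨t, ht⟩)
      then pstar x else 0)

/-- One accept–reject–residual step commits tokens with exactly the target law. -/
lemma committedKernel_eq_target {V : Type*} [Fintype V] (π ρ : V → ℝ)
    (hπ : ∑ a, π a = 1) (a : V) : committedKernel π ρ a = π a := by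
  unfold committedKernel
  split_ifs with h
  · have hle : ∀ z ∈ Finset.univ, min (π z) (ρ z) ≤ π z :=
      fun z _ => min_le_left _ _
    have heq := (Finset.sum_eq_sum_iff_of_le hle).mp (by rw [hπ]; linarith)
    exact heq a (Finset.mem_univ a)
  · rcases le_total (π a) (ρ a) with hle | hle
    · rw [min_eq_left hle, max_eq_right (by linarith)]; simp
    · rw [min_eq_right hle, max_eq_left (by linarith)]
      field_simp
      ring

/-- The (unnormalised) mass of configurations agreeing with `y` outside the
resampled positions and with `xR` on the first `k` resampled positions. -/
noncomputable def Afun {V : Type*} [Fintype V] {d L : ℕ}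
    (pstar : (Fin d → V) → ℝ) (r : Fin L → Fin d)
    (y : {j : Fin d // j ∉ Set.range r} → V) (xR : Fin L → V) (k : ℕ) : ℝ :=
  ∑ x : Fin d → V,
    if (∀ j : Fin d, (hj : j ∉ Set.range r) → x j = y ⟨j, hj⟩) ∧
       (∀ t : Fin L, (t : ℕ) < k → x (r t) = xR t)
    then pstar x else 0

lemma Afun_pos {V : Type*} [Fintype V] {d L : ℕ}
    (pstar : (Fin d → V) → ℝ) (hpos : ∀ x, 0 < pstar x)
    (r : Fin L → Fin d) (hinj : Function.Injective r)
    (y : {j : Fin d // j ∉ Set.range r} → V)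
    (xR : Fin L → V) (k : ℕ) :
    0 < Afun pstar r y xR k := by
  classical
  unfold Afun
  set x0 : Fin d → V := fun j =>
    if h : ∃ t : Fin L, r t = j then xR h.choose
    else y ⟨j, fun hj => h (Set.mem_range.mp hj)⟩ with hx0
  have hx0cond : (∀ j : Fin d, (hj : j ∉ Set.range r) → x0 j = y ⟨j, hj⟩) ∧
      (∀ t : Fin L, (t : ℕ) < k → x0 (r t) = xR t) := by
    constructor
    · intro j hj
      have h' : ¬ ∃ t : Fin L, r t = j := fun ⟨t, ht⟩ => hj ⟨t, ht⟩
      simp only [hx0, dif_neg h']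
    · intro t _
      have h : ∃ t' : Fin L, r t' = r t := ⟨t, rfl⟩
      have hc : h.choose = t := hinj h.choose_spec
      simp only [hx0, dif_pos h, hc]
  have hle := Finset.single_le_sum
    (f := fun x : Fin d → V =>
      if (∀ j : Fin d, (hj : j ∉ Set.range r) → x j = y ⟨j, hj⟩) ∧
         (∀ t : Fin L, (t : ℕ) < k → x (r t) = xR t)
      then pstar x else 0)
    (fun x _ => by split_ifs with h; exacts [(hpos x).le, le_refl 0])
    (Finset.mem_univ x0)
  rw [if_pos hx0cond] at hle
  exact lt_of_lt_of_le (hpos x0) hle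

lemma sum_if_and_eq' {α V : Type*} [Fintype V] [Fintype α]
    (P : α → Prop) (g : α → V) (f : α → ℝ) :
    ∑ a : V, ∑ x : α, (if P x ∧ g x = a then f x else 0) =
      ∑ x : α, if P x then f x else 0 := by
  rw [Finset.sum_comm]
  refine Finset.sum_congr rfl fun x _ => ?_
  by_cases h : P x
  · simp [h]
  · simp [h]

lemma prod_range_div'' (f : ℕ → ℝ) (hf : ∀ k, f k ≠ 0) (n : ℕ) :
    ∏ i ∈ Finset.range n, f (i + 1) / f i = f n / f 0 := by
  induction n with
  | zero => simp [div_self (hf 0)]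
  | succ n ih =>
      rw [Finset.prod_range_succ, ih, div_mul_div_comm,
        mul_comm (f n) (f (n + 1))]
      exact mul_div_mul_right _ _ (hf n)

/-- Corollary 1, Conditional correctness under resampling: for a
set of resampling positions `R = {r 0 < r 1 < … < r (L-1)}` and fixed values
`y` outside `R`, sampling the resampled coordinates left to right from the
committed kernels built from the oracle conditionals `π_m` and arbitrary draft
laws `ρ_m` yields exactly the oracle conditional joint law
`P(X_R = x_R | X_{R^c} = y)`. -/
theorem resampling_conditional_correctness
    {V : Type*} [Fintype V] [Nonempty V] {d L : ℕ} (hd : 0 < d) (hL : 0 < L)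
    (pstar : (Fin d → V) → ℝ)
    (hpos : ∀ x, 0 < pstar x) (hsum : ∑ x, pstar x = 1)
    (r : Fin L → Fin d) (hr : StrictMono r)
    (y : {j : Fin d // j ∉ Set.range r} → V)
    (ρ : (m : Fin L) → (Fin (m : ℕ) → V) → V → ℝ)
    (hρ0 : ∀ m w a, 0 ≤ ρ m w a) (hρ1 : ∀ m w, ∑ a, ρ m w a = 1) :
    ∀ xR : Fin L → V,
      (∏ m : Fin L,
        committedKernel
          (resampleCond pstar r y m (fun t => xR (Fin.castLE m.isLt.le t)))
          (ρ m (fun t => xR (Fin.castLE m.isLt.le t)))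
          (xR m))
      =
      (∑ x : Fin d → V,
          if (∀ m : Fin L, x (r m) = xR m) ∧
             (∀ j : Fin d, (hj : j ∉ Set.range r) → x j = y ⟨j, hj⟩)
          then pstar x else 0) /
      (∑ x : Fin d → V,
          if ∀ j : Fin d, (hj : j ∉ Set.range r) → x j = y ⟨j, hj⟩
          then pstar x else 0) := by
  intro xR
  have hinj := hr.injective
  have hApos : ∀ k, 0 < Afun pstar r y xR k :=
    fun k => Afun_pos pstar hpos r hinj y xR k
  -- rewriting the partial-assignment condition
  have hiff : ∀ (m : Fin L) (x : Fin d → V),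
      (∀ t : Fin L, (ht : (t : ℕ) < (m : ℕ)) →
        x (r t) = xR (Fin.castLE m.isLt.le ⟨(t : ℕ), ht⟩)) ↔
      (∀ t : Fin L, (t : ℕ) < (m : ℕ) → x (r t) = xR t) := by
    intro m x
    have he : ∀ (t : Fin L) (ht : (t : ℕ) < (m : ℕ)),
        Fin.castLE m.isLt.le ⟨(t : ℕ), ht⟩ = t := fun t ht => Fin.ext rfl
    constructor
    · intro h t ht; rw [← he t ht]; exact h t ht
    · intro h t ht; rw [he t ht]; exact h t ht
  -- resampleCond with the clean condition
  have hres : ∀ (m : Fin L) (a : V),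
      resampleCond pstar r y m (fun t => xR (Fin.castLE m.isLt.le t)) a =
      (∑ x : Fin d → V,
        if ((∀ j : Fin d, (hj : j ∉ Set.range r) → x j = y ⟨j, hj⟩) ∧
           (∀ t : Fin L, (t : ℕ) < (m : ℕ) → x (r t) = xR t)) ∧ x (r m) = a
        then pstar x else 0) / Afun pstar r y xR (m : ℕ) := by
    intro m a
    unfold resampleCond Afun
    congr 1
    exact Finset.sum_congr rfl fun x _ => if_congr
      ⟨fun ⟨h1, h2, h3⟩ => ⟨⟨h1, (hiff m x).mp h2⟩, h3⟩,
       fun ⟨⟨h1, h2⟩, h3⟩ => ⟨h1, (hiff m x).mpr h2, h3⟩⟩ rfl rfl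
  -- the conditional law is a probability mass function
  have hsum1 : ∀ m : Fin L,
      ∑ a, resampleCond pstar r y m (fun t => xR (Fin.castLE m.isLt.le t)) a = 1 := by
    intro m
    have hmarg : ∑ a : V, ∑ x : Fin d → V,
        (if ((∀ j : Fin d, (hj : j ∉ Set.range r) → x j = y ⟨j, hj⟩) ∧
            (∀ t : Fin L, (t : ℕ) < (m : ℕ) → x (r t) = xR t)) ∧ x (r m) = a
         then pstar x else 0) =
        ∑ x : Fin d → V,
          if (∀ j : Fin d, (hj : j ∉ Set.range r) → x j = y ⟨j, hj⟩) ∧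
             (∀ t : Fin L, (t : ℕ) < (m : ℕ) → x (r t) = xR t)
          then pstar x else 0 := by
      rw [Finset.sum_comm]
      refine Finset.sum_congr rfl fun x _ => ?_
      by_cases h : (∀ j : Fin d, (hj : j ∉ Set.range r) → x j = y ⟨j, hj⟩) ∧
          (∀ t : Fin L, (t : ℕ) < (m : ℕ) → x (r t) = xR t)
      · rw [if_pos h]
        have h2 : ∀ a : V, (((∀ j : Fin d, (hj : j ∉ Set.range r) → x j = y ⟨j, hj⟩) ∧
            (∀ t : Fin L, (t : ℕ) < (m : ℕ) → x (r t) = xR t)) ∧ x (r m) = a) ↔ x (r m) = a :=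
          fun a => ⟨fun hc => hc.2, fun ha => ⟨h, ha⟩⟩
        rw [Finset.sum_congr rfl fun a _ => if_congr (h2 a) rfl rfl]
        simp
      · rw [if_neg h, Finset.sum_eq_zero]
        intro a _
        exact if_neg fun hc => h hc.1
    have hAm : (∑ x : Fin d → V,
        if (∀ j : Fin d, (hj : j ∉ Set.range r) → x j = y ⟨j, hj⟩) ∧
           (∀ t : Fin L, (t : ℕ) < (m : ℕ) → x (r t) = xR t)
        then pstar x else 0) = Afun pstar r y xR (m : ℕ) := rfl
    rw [Finset.sum_congr rfl fun a _ => hres m a, ← Finset.sum_div, hmarg, hAm]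
    exact div_self (hApos (m : ℕ)).ne'
  -- each committed kernel contributes a ratio of successive masses
  have hck : ∀ m : Fin L,
      committedKernel
        (resampleCond pstar r y m (fun t => xR (Fin.castLE m.isLt.le t)))
        (ρ m (fun t => xR (Fin.castLE m.isLt.le t))) (xR m)
      = Afun pstar r y xR ((m : ℕ) + 1) / Afun pstar r y xR (m : ℕ) := by
    intro m
    rw [committedKernel_eq_target _ _ (hsum1 m), hres m (xR m)]
    congr 1
    unfold Afun
    refine Finset.sum_congr rfl fun x _ => if_congr ?_ rfl rfl
    constructor
    · rintro ⟨⟨h1, h2⟩, h3⟩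
      refine ⟨h1, fun t ht => ?_⟩
      rcases Nat.lt_succ_iff_lt_or_eq.mp ht with h | h
      · exact h2 t h
      · have ht' : t = m := Fin.ext h
        rw [ht']; exact h3
    · rintro ⟨h1, h2⟩
      exact ⟨⟨h1, fun t ht => h2 t (ht.trans (Nat.lt_succ_self _))⟩,
        h2 m (Nat.lt_succ_self _)⟩
  -- telescope
  calc
    ∏ m : Fin L,
        committedKernel
          (resampleCond pstar r y m (fun t => xR (Fin.castLE m.isLt.le t)))
          (ρ m (fun t => xR (Fin.castLE m.isLt.le t))) (xR m)
      = ∏ m : Fin L, Afun pstar r y xR ((m : ℕ) + 1) / Afun pstar r y xR (m : ℕ) :=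
        Finset.prod_congr rfl fun m _ => hck m
    _ = ∏ i ∈ Finset.range L, Afun pstar r y xR (i + 1) / Afun pstar r y xR i :=
        by exact Fin.prod_univ_eq_prod_range
              (fun i => Afun pstar r y xR (i + 1) / Afun pstar r y xR i) L
    _ = Afun pstar r y xR L / Afun pstar r y xR 0 :=
        prod_range_div'' _ (fun k => (hApos k).ne') L
    _ = _ := by
        congr 1
        · unfold Afun
          refine Finset.sum_congr rfl fun x _ => if_congr ?_ rfl rfl
          exact ⟨fun ⟨h1, h2⟩ => ⟨fun t => h2 t t.isLt, h1⟩,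
            fun ⟨h1, h2⟩ => ⟨h2, fun t _ => h1 t⟩⟩
        · unfold Afun
          refine Finset.sum_congr rfl fun x _ => if_congr ?_ rfl rfl
          exact ⟨fun h => h.1, fun h => ⟨h, fun t ht => absurd ht (Nat.not_lt_zero _)⟩⟩
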